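/- Let H be a real inner product space, let L > 0 and N ≥ 1, and let (uₙ), (ξₙ), (Fₙ), (Sₙ) be H-valued sequences satisfying, for every n with 0 ≤ n ≤ N−1, the Robin recursions L·u_{n+1} + F_{n+1} = (L/2)(uₙ + ξₙ) + (1/2)(Fₙ + Sₙ) and L·ξ_{n+1} − S_{n+1} = (L/2)(uₙ + ξₙ) − (1/2)(Fₙ + Sₙ). Define Iₙ = (L/2)(‖uₙ‖² + ‖ξₙ‖²) + (1/(2L))(‖Fₙ‖² + ‖Sₙ‖²). Then ∑_{n=0}^{N−1} [ L·⟨u_{n+1} − (uₙ+ξₙ)/2, u_{n+1}⟩ + L·⟨ξ_{n+1} − (uₙ+ξₙ)/2, ξ_{n+1}⟩ − (1/2)·⟨Fₙ + Sₙ, u_{n+1} − ξ_{n+1}⟩ ] ≥ I_N − I₀. -/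

import Mathlib

open scoped RealInnerProductSpace

lemma step_ineq {H : Type*} [NormedAddCommGroup H] [InnerProductSpace ℝ H]
    (L : ℝ) (hL : 0 < L) (a b f s a' b' f' s' : H)
    (h1 : L • a' + f' = (L / 2) • (a + b) + ((1 : ℝ) / 2) • (f + s))
    (h2 : L • b' - s' = (L / 2) • (a + b) - ((1 : ℝ) / 2) • (f + s)) :
    ((L / 2) * (‖a'‖ ^ 2 + ‖b'‖ ^ 2) + (1 / (2 * L)) * (‖f'‖ ^ 2 + ‖s'‖ ^ 2))
      - ((L / 2) * (‖a‖ ^ 2 + ‖b‖ ^ 2) + (1 / (2 * L)) * (‖f‖ ^ 2 + ‖s‖ ^ 2)) ≤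
    L * ⟪a' - ((1 : ℝ) / 2) • (a + b), a'⟫
      + L * ⟪b' - ((1 : ℝ) / 2) • (a + b), b'⟫
      - (1 / 2) * ⟪f + s, a' - b'⟫ := by
  set p := a + b with hp
  set g := f + s with hg
  have hf' : f' = (L / 2) • p + ((1 : ℝ) / 2) • g - L • a' := by
    rw [← h1]; abel
  have hs' : s' = L • b' - ((L / 2) • p - ((1 : ℝ) / 2) • g) := by
    rw [← h2]; abel
  have hP : ‖p‖ ^ 2 ≤ 2 * (‖a‖ ^ 2 + ‖b‖ ^ 2) := by
    rw [hp]; nlinarith [norm_add_sq_real a b, norm_sub_sq_real a b, sq_nonneg ‖a - b‖]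
  have hG : ‖g‖ ^ 2 ≤ 2 * (‖f‖ ^ 2 + ‖s‖ ^ 2) := by
    rw [hg]; nlinarith [norm_add_sq_real f s, norm_sub_sq_real f s, sq_nonneg ‖f - s‖]
  have key : L ^ 2 * (‖a'‖ ^ 2 + ‖b'‖ ^ 2) + (‖f'‖ ^ 2 + ‖s'‖ ^ 2)
      - (L ^ 2 * (‖a‖ ^ 2 + ‖b‖ ^ 2) + (‖f‖ ^ 2 + ‖s‖ ^ 2)) ≤
      2 * L * (L * ⟪a' - ((1 : ℝ) / 2) • p, a'⟫
        + L * ⟪b' - ((1 : ℝ) / 2) • p, b'⟫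
        - (1 / 2) * ⟪g, a' - b'⟫) := by
    rw [hf', hs']
    simp only [← real_inner_self_eq_norm_sq] at hP hG ⊢
    simp only [inner_add_left, inner_add_right, inner_sub_left, inner_sub_right,
      real_inner_smul_left, real_inner_smul_right] at hP hG ⊢
    nlinarith [mul_nonneg (le_of_lt hL) (by linarith : (0:ℝ) ≤ 2 * (⟪a, a⟫ + ⟪b, b⟫) - ⟪p, p⟫),
      (by linarith : (0:ℝ) ≤ 2 * (⟪f, f⟫ + ⟪s, s⟫) - ⟪g, g⟫),
      real_inner_comm a' p, real_inner_comm b' p, real_inner_comm a' g,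
      real_inner_comm b' g, real_inner_comm p g, real_inner_comm a' b', hL, sq_nonneg L]
  have h2L : (0 : ℝ) < 2 * L := by linarith
  rw [← mul_le_mul_iff_right₀ h2L]
  have hL' : L ≠ 0 := ne_of_gt hL
  have e : 2 * L * (((L / 2) * (‖a'‖ ^ 2 + ‖b'‖ ^ 2) + (1 / (2 * L)) * (‖f'‖ ^ 2 + ‖s'‖ ^ 2))
      - ((L / 2) * (‖a‖ ^ 2 + ‖b‖ ^ 2) + (1 / (2 * L)) * (‖f‖ ^ 2 + ‖s‖ ^ 2)))
      = L ^ 2 * (‖a'‖ ^ 2 + ‖b'‖ ^ 2) + (‖f'‖ ^ 2 + ‖s'‖ ^ 2)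
      - (L ^ 2 * (‖a‖ ^ 2 + ‖b‖ ^ 2) + (‖f‖ ^ 2 + ‖s‖ ^ 2)) := by
    field_simp
  rw [e]
  exact key

/-- Telescoped interface estimate yielding unconditional stability (Theorem 4.2):
summing the per-step interface inequality over `n` shows the accumulated interface
terms control the total growth of the interface energy `I`. -/
theorem stmt10 {H : Type*} [NormedAddCommGroup H] [InnerProductSpace ℝ H]
    (L : ℝ) (hL : 0 < L) (N : ℕ) (hN : 1 ≤ N)
    (u ξ F S : ℕ → H)
    (h1 : ∀ n, n < N →
      L • u (n + 1) + F (n + 1) =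
        (L / 2) • (u n + ξ n) + ((1 : ℝ) / 2) • (F n + S n))
    (h2 : ∀ n, n < N →
      L • ξ (n + 1) - S (n + 1) =
        (L / 2) • (u n + ξ n) - ((1 : ℝ) / 2) • (F n + S n))
    (I : ℕ → ℝ)
    (hI : ∀ n, I n = (L / 2) * (‖u n‖ ^ 2 + ‖ξ n‖ ^ 2)
        + (1 / (2 * L)) * (‖F n‖ ^ 2 + ‖S n‖ ^ 2)) :
    I N - I 0 ≤
      ∑ n ∈ Finset.range N,
        (L * ⟪u (n + 1) - ((1 : ℝ) / 2) • (u n + ξ n), u (n + 1)⟫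
          + L * ⟪ξ (n + 1) - ((1 : ℝ) / 2) • (u n + ξ n), ξ (n + 1)⟫
          - (1 / 2) * ⟪F n + S n, u (n + 1) - ξ (n + 1)⟫) := by
  have tel : ∑ n ∈ Finset.range N, (I (n + 1) - I n) = I N - I 0 :=
    Finset.sum_range_sub I N
  rw [← tel]
  apply Finset.sum_le_sum
  intro n hn
  rw [Finset.mem_range] at hn
  rw [hI (n + 1), hI n]
  exact step_ineq L hL (u n) (ξ n) (F n) (S n) (u (n + 1)) (ξ (n + 1))
    (F (n + 1)) (S (n + 1)) (h1 n hn) (h2 n hn)
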